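/- (Proposition 2.2 (ii): selfadjointness.) For all f, g ∈ L²_M one has ⟨Q f, g⟩_M = ⟨f, Q g⟩_M, that is, ∑' n, ∫ p, (Q f n p) * g n p / M n p = ∑' n, ∫ p, f n p * (Q g n p) / M n p. -/

import Mathlib

open MeasureTheory Real

instance : SigmaFinite (Measure.count : Measure ℕ) := by
  constructor
  refine ⟨⟨fun n => Set.Iio n, fun _ => trivial, fun n => ?_, ?_⟩⟩
  · rw [Measure.count_apply_finite _ (Set.finite_Iio n)]
    exact ENNReal.natCast_lt_top _
  · rw [Set.eq_univ_iff_forall]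
    intro n
    exact Set.mem_iUnion.mpr ⟨n + 1, Nat.lt_succ_self n⟩

theorem meas_prod_nat {h : ℕ → ℝ → ℝ} (hm : ∀ n, Measurable (h n)) :
    Measurable fun x : ℕ × ℝ => h x.1 x.2 := by
  have h1 : Measurable fun y : ℝ × ℕ => h y.2 y.1 :=
    measurable_from_prod_countable_left fun n => hm n
  exact h1.comp measurable_swap

theorem integral_count_eq {f : ℕ → ℝ} (hf : Integrable f Measure.count) :
    ∫ n, f n ∂Measure.count = ∑' n, f n := by
  rw [integral_countable' hf]
  simp [Measure.count_singleton]

theorem integrable_prod_nat {h : ℕ → ℝ → ℝ} (hm : ∀ n, Measurable (h n))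
    (hint : ∀ n, Integrable (h n)) (hsum : Summable fun n => ∫ p, |h n p|) :
    Integrable (fun x : ℕ × ℝ => h x.1 x.2) (Measure.count.prod volume) := by
  rw [integrable_prod_iff (meas_prod_nat hm).aestronglyMeasurable]
  constructor
  · exact Filter.Eventually.of_forall fun n => hint n
  · rw [integrable_count_iff]
    refine hsum.congr fun n => ?_
    simp only [Real.norm_eq_abs]
    rw [abs_of_nonneg (integral_nonneg fun p => abs_nonneg _)]

theorem integral_prod_nat_eq {h : ℕ × ℝ → ℝ}
    (hint : Integrable h (Measure.count.prod volume)) :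
    ∫ x, h x ∂(Measure.count.prod volume) = ∑' n, ∫ p, h (n, p) := by
  rw [integral_prod _ hint, integral_count_eq hint.integral_prod_left]

theorem abs_le_am {t Mv : ℝ} (h : 0 < Mv) : |t| ≤ (t ^ 2 / Mv + Mv) / 2 := by
  have h1 : t ^ 2 / Mv + Mv = (t ^ 2 + Mv * Mv) / Mv := by field_simp
  rw [h1, div_div, le_div_iff₀ (by positivity)]
  nlinarith [sq_nonneg (|t| - Mv), sq_abs t, abs_nonneg t]

theorem abs_mul_div_le {a b Mv : ℝ} (h : 0 < Mv) :
    |a * b| / Mv ≤ (a ^ 2 / Mv + b ^ 2 / Mv) / 2 := by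
  have h1 : |a * b| * 2 ≤ a ^ 2 + b ^ 2 := by
    nlinarith [sq_nonneg (|a| - |b|), sq_abs a, sq_abs b, abs_mul a b]
  rw [← add_div, div_div, div_le_div_iff₀ h (by positivity)]
  nlinarith [mul_le_mul_of_nonneg_right h1 h.le]

theorem stmt5
    (m ε : ℕ → ℝ)
    (hm : ∀ n, 0 < m n)
    (hε : Summable fun n => Real.exp (-ε n))
    (Z : ℝ) (hZ : Z = ∑' n, Real.exp (-ε n))
    (M : ℕ → ℝ → ℝ)
    (hM : ∀ n p, M n p =
      Real.exp (-(p ^ 2 / (2 * m n) + ε n)) / (Real.sqrt (2 * Real.pi * m n) * Z))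
    (hMnorm : (∑' n, ∫ p, M n p) = 1)
    (α : ℕ → ℕ → ℝ → ℝ → ℝ)
    (hαmeas : ∀ n n', Measurable fun q : ℝ × ℝ => α n n' q.1 q.2)
    (α₁ α₂ : ℝ) (hα₁ : 0 < α₁) (hα₁₂ : α₁ ≤ α₂)
    (hsym : ∀ n n' p p', α n n' p p' = α n' n p' p)
    (hbd : ∀ n n' p p', α₁ ≤ α n n' p p' ∧ α n n' p p' ≤ α₂)
    (Q : (ℕ → ℝ → ℝ) → ℕ → ℝ → ℝ)
    (hQ : ∀ f n p, Q f n p =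
      ∑' n', ∫ p', α n n' p p' * (M n p * f n' p' - M n' p' * f n p))
    (memL2M : (ℕ → ℝ → ℝ) → Prop)
    (hmem : ∀ f, memL2M f ↔ (∀ n, Measurable (f n)) ∧
      (∀ n, Integrable fun p => f n p ^ 2 / M n p) ∧
      (Summable fun n => ∫ p, f n p ^ 2 / M n p))
    (nrm : (ℕ → ℝ → ℝ) → ℝ)
    (hnrm : ∀ f, nrm f = (∑' n, ∫ p, f n p ^ 2 / M n p) ^ ((1 : ℝ) / 2)) :
    ∀ f g, memL2M f → memL2M g →
      (∑' n, ∫ p, Q f n p * g n p / M n p) =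
        (∑' n, ∫ p, f n p * Q g n p / M n p) := by
  intro f g hfmem hgmem
  obtain ⟨hfmeas, hfint2, hfsum⟩ := (hmem f).mp hfmem
  obtain ⟨hgmeas, hgint2, hgsum⟩ := (hmem g).mp hgmem
  clear hmem hfmem hgmem hnrm hMnorm
  set ν : Measure (ℕ × ℝ) := Measure.count.prod volume with hν
  -- basic facts about M
  have hZpos : 0 < Z := by
    rw [hZ]; exact Summable.tsum_pos hε (fun n => (Real.exp_pos _).le) 0 (Real.exp_pos _)
  have hsq : ∀ n, 0 < Real.sqrt (2 * Real.pi * m n) := fun n =>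
    Real.sqrt_pos.mpr (by have := hm n; positivity)
  have hMpos : ∀ n p, 0 < M n p := fun n p => by
    rw [hM]; exact div_pos (Real.exp_pos _) (mul_pos (hsq n) hZpos)
  have hMrw : ∀ n, M n = fun p =>
      Real.exp (-(2 * m n)⁻¹ * p ^ 2) *
        (Real.exp (-ε n) / (Real.sqrt (2 * Real.pi * m n) * Z)) := by
    intro n
    funext p
    rw [hM, show -(p ^ 2 / (2 * m n) + ε n) = -(2 * m n)⁻¹ * p ^ 2 + -ε n by ring,
      Real.exp_add]
    ring
  have hMmeas : ∀ n, Measurable (M n) := fun n => by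
    rw [hMrw]; fun_prop
  have hMint : ∀ n, Integrable (M n) := fun n => by
    rw [hMrw]
    exact (integrable_exp_neg_mul_sq (by have := hm n; positivity)).mul_const _
  have hMval : ∀ n, (∫ p, M n p) = Real.exp (-ε n) / Z := by
    intro n
    rw [hMrw]
    rw [MeasureTheory.integral_mul_const, integral_gaussian]
    rw [show Real.pi / (2 * m n)⁻¹ = 2 * Real.pi * m n by
      field_simp]
    rw [mul_div_assoc', mul_div_mul_left _ _ (hsq n).ne']
  have hMsum : Summable fun n => ∫ p, M n p := by
    refine (hε.div_const Z).congr fun n => (hMval n).symm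
  -- generic L¹(ν) criterion
  have key : ∀ h b : ℕ → ℝ → ℝ, (∀ n, Measurable (h n)) →
      (∀ n, Integrable (b n)) → (Summable fun n => ∫ p, b n p) →
      (∀ n p, |h n p| ≤ b n p) →
      Integrable (fun x : ℕ × ℝ => h x.1 x.2) ν := by
    intro h b hm1 hb1 hb2 hle
    have hint : ∀ n, Integrable (h n) := fun n =>
      (hb1 n).mono' (hm1 n).aestronglyMeasurable
        (Filter.Eventually.of_forall fun p => by
          rw [Real.norm_eq_abs]; exact hle n p)
    refine integrable_prod_nat hm1 hint
      (Summable.of_nonneg_of_le (fun n => integral_nonneg fun p => abs_nonneg _)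
        (fun n => integral_mono (hint n).abs (hb1 n) (hle n)) hb2)
  -- L¹ memberships
  have hsum_half : ∀ u : ℕ → ℝ → ℝ,
      (∀ n, Integrable fun p => u n p ^ 2 / M n p) →
      (Summable fun n => ∫ p, u n p ^ 2 / M n p) →
      Summable fun n => ∫ p, (u n p ^ 2 / M n p + M n p) / 2 := by
    intro u hu1 hu2
    refine ((hu2.add hMsum).div_const 2).congr fun n => ?_
    rw [MeasureTheory.integral_div, integral_add (hu1 n) (hMint n)]
  have hfν : Integrable (fun x : ℕ × ℝ => f x.1 x.2) ν :=
    key f (fun n p => (f n p ^ 2 / M n p + M n p) / 2) hfmeas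
      (fun n => ((hfint2 n).add (hMint n)).div_const 2)
      (hsum_half f hfint2 hfsum) (fun n p => abs_le_am (hMpos n p))
  have hgν : Integrable (fun x : ℕ × ℝ => g x.1 x.2) ν :=
    key g (fun n p => (g n p ^ 2 / M n p + M n p) / 2) hgmeas
      (fun n => ((hgint2 n).add (hMint n)).div_const 2)
      (hsum_half g hgint2 hgsum) (fun n p => abs_le_am (hMpos n p))
  have hMν : Integrable (fun x : ℕ × ℝ => M x.1 x.2) ν :=
    key M M hMmeas hMint hMsum (fun n p => (abs_of_pos (hMpos n p)).le)
  have hfgmeas : ∀ n, Measurable fun p => f n p * g n p / M n p := fun n =>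
    ((hfmeas n).mul (hgmeas n)).div (hMmeas n)
  have hfgle : ∀ n p, |f n p * g n p / M n p| ≤
      (f n p ^ 2 / M n p + g n p ^ 2 / M n p) / 2 := fun n p => by
    rw [abs_div, abs_of_pos (hMpos n p)]
    exact abs_mul_div_le (hMpos n p)
  have hFGν : Integrable (fun x : ℕ × ℝ => f x.1 x.2 * g x.1 x.2 / M x.1 x.2) ν :=
    key (fun n p => f n p * g n p / M n p)
      (fun n p => (f n p ^ 2 / M n p + g n p ^ 2 / M n p) / 2) hfgmeas
      (fun n => ((hfint2 n).add (hgint2 n)).div_const 2)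
      (by
        refine ((hfsum.add hgsum).div_const 2).congr fun n => ?_
        rw [MeasureTheory.integral_div, integral_add (hfint2 n) (hgint2 n)])
      hfgle
  -- measurability on products
  have hfm2 : Measurable fun x : ℕ × ℝ => f x.1 x.2 := meas_prod_nat hfmeas
  have hgm2 : Measurable fun x : ℕ × ℝ => g x.1 x.2 := meas_prod_nat hgmeas
  have hMm2 : Measurable fun x : ℕ × ℝ => M x.1 x.2 := meas_prod_nat hMmeas
  have hαm : Measurable fun z : (ℕ × ℝ) × ℕ × ℝ => α z.1.1 z.2.1 z.1.2 z.2.2 := by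
    have h1 : Measurable fun w : (ℝ × ℝ) × ℕ × ℕ => α w.2.1 w.2.2 w.1.1 w.1.2 :=
      measurable_from_prod_countable_left fun nn => hαmeas nn.1 nn.2
    exact h1.comp (((measurable_fst.snd.prodMk measurable_snd.snd)).prodMk
      (measurable_fst.fst.prodMk measurable_snd.fst))
  have hα₂pos : (0:ℝ) < α₂ := lt_of_lt_of_le hα₁ hα₁₂
  have hαabs : ∀ n n' p p', |α n n' p p'| ≤ α₂ := fun n n' p p' =>
    abs_le.mpr ⟨by linarith [(hbd n n' p p').1], (hbd n n' p p').2⟩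
  -- the three kernels
  set A : (ℕ × ℝ) × ℕ × ℝ → ℝ :=
    fun z => α z.1.1 z.2.1 z.1.2 z.2.2 * (f z.2.1 z.2.2 * g z.1.1 z.1.2) with hA
  set A' : (ℕ × ℝ) × ℕ × ℝ → ℝ :=
    fun z => α z.1.1 z.2.1 z.1.2 z.2.2 * (g z.2.1 z.2.2 * f z.1.1 z.1.2) with hA'
  set B : (ℕ × ℝ) × ℕ × ℝ → ℝ :=
    fun z => α z.1.1 z.2.1 z.1.2 z.2.2 *
      (M z.2.1 z.2.2 * (f z.1.1 z.1.2 * g z.1.1 z.1.2 / M z.1.1 z.1.2)) with hB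
  have hAint : Integrable A (ν.prod ν) := by
    refine ((hgν.abs.mul_prod hfν.abs).const_mul α₂).mono'
      (hαm.mul ((hfm2.comp measurable_snd).mul
        (hgm2.comp measurable_fst))).aestronglyMeasurable
      (Filter.Eventually.of_forall fun z => ?_)
    rw [hA]
    calc ‖α z.1.1 z.2.1 z.1.2 z.2.2 * (f z.2.1 z.2.2 * g z.1.1 z.1.2)‖
        = |α z.1.1 z.2.1 z.1.2 z.2.2| * |f z.2.1 z.2.2 * g z.1.1 z.1.2| := by
          rw [Real.norm_eq_abs, abs_mul]
      _ ≤ α₂ * |f z.2.1 z.2.2 * g z.1.1 z.1.2| :=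
          mul_le_mul_of_nonneg_right (hαabs _ _ _ _) (abs_nonneg _)
      _ = α₂ * (|g z.1.1 z.1.2| * |f z.2.1 z.2.2|) := by rw [abs_mul]; ring
  have hA'int : Integrable A' (ν.prod ν) := by
    refine ((hfν.abs.mul_prod hgν.abs).const_mul α₂).mono'
      (hαm.mul ((hgm2.comp measurable_snd).mul
        (hfm2.comp measurable_fst))).aestronglyMeasurable
      (Filter.Eventually.of_forall fun z => ?_)
    rw [hA']
    calc ‖α z.1.1 z.2.1 z.1.2 z.2.2 * (g z.2.1 z.2.2 * f z.1.1 z.1.2)‖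
        = |α z.1.1 z.2.1 z.1.2 z.2.2| * |g z.2.1 z.2.2 * f z.1.1 z.1.2| := by
          rw [Real.norm_eq_abs, abs_mul]
      _ ≤ α₂ * |g z.2.1 z.2.2 * f z.1.1 z.1.2| :=
          mul_le_mul_of_nonneg_right (hαabs _ _ _ _) (abs_nonneg _)
      _ = α₂ * (|f z.1.1 z.1.2| * |g z.2.1 z.2.2|) := by rw [abs_mul]; ring
  have hBint : Integrable B (ν.prod ν) := by
    refine ((hFGν.abs.mul_prod hMν.abs).const_mul α₂).mono'
      (hαm.mul ((hMm2.comp measurable_snd).mul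
        (((hfm2.comp measurable_fst).mul (hgm2.comp measurable_fst)).div
          (hMm2.comp measurable_fst)))).aestronglyMeasurable
      (Filter.Eventually.of_forall fun z => ?_)
    rw [hB]
    calc ‖α z.1.1 z.2.1 z.1.2 z.2.2 *
          (M z.2.1 z.2.2 * (f z.1.1 z.1.2 * g z.1.1 z.1.2 / M z.1.1 z.1.2))‖
        = |α z.1.1 z.2.1 z.1.2 z.2.2| *
          |M z.2.1 z.2.2 * (f z.1.1 z.1.2 * g z.1.1 z.1.2 / M z.1.1 z.1.2)| := by
          rw [Real.norm_eq_abs, abs_mul]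
      _ ≤ α₂ * |M z.2.1 z.2.2 * (f z.1.1 z.1.2 * g z.1.1 z.1.2 / M z.1.1 z.1.2)| :=
          mul_le_mul_of_nonneg_right (hαabs _ _ _ _) (abs_nonneg _)
      _ = α₂ * (|f z.1.1 z.1.2 * g z.1.1 z.1.2 / M z.1.1 z.1.2| * |M z.2.1 z.2.2|) := by
          rw [abs_mul]; ring
  -- Q as a ν-integral
  have hQint : ∀ (u : ℕ → ℝ → ℝ), (∀ k, Measurable (u k)) →
      Integrable (fun x : ℕ × ℝ => u x.1 x.2) ν → ∀ n p,
      Integrable (fun y : ℕ × ℝ =>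
        α n y.1 p y.2 * (M n p * u y.1 y.2 - M y.1 y.2 * u n p)) ν := by
    intro u humeas huν n p
    have hαslice : Measurable fun y : ℕ × ℝ => α n y.1 p y.2 := by
      have := hαm.comp
        (measurable_const.prodMk measurable_id : Measurable fun y : ℕ × ℝ => ((n, p), y))
      exact this
    refine (((huν.abs.const_mul (M n p)).add
        (hMν.mul_const |u n p|)).const_mul α₂).mono'
      (hαslice.mul ((measurable_const.mul (meas_prod_nat humeas)).sub
        ((meas_prod_nat hMmeas).mul measurable_const))).aestronglyMeasurable
      (Filter.Eventually.of_forall fun y => ?_)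
    have h1 : |M n p * u y.1 y.2 - M y.1 y.2 * u n p| ≤
        M n p * |u y.1 y.2| + M y.1 y.2 * |u n p| := by
      refine (abs_sub _ _).trans ?_
      rw [abs_mul, abs_mul, abs_of_pos (hMpos n p), abs_of_pos (hMpos y.1 y.2)]
    calc ‖α n y.1 p y.2 * (M n p * u y.1 y.2 - M y.1 y.2 * u n p)‖
        = |α n y.1 p y.2| * |M n p * u y.1 y.2 - M y.1 y.2 * u n p| := by
          rw [Real.norm_eq_abs, abs_mul]
      _ ≤ α₂ * (M n p * |u y.1 y.2| + M y.1 y.2 * |u n p|) :=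
          mul_le_mul (hαabs _ _ _ _) h1 (abs_nonneg _) hα₂pos.le
  have hQrepr : ∀ (u : ℕ → ℝ → ℝ), (∀ k, Measurable (u k)) →
      Integrable (fun x : ℕ × ℝ => u x.1 x.2) ν → ∀ n p,
      Q u n p = ∫ y : ℕ × ℝ,
        α n y.1 p y.2 * (M n p * u y.1 y.2 - M y.1 y.2 * u n p) ∂ν := by
    intro u humeas huν n p
    rw [hQ]
    exact (integral_prod_nat_eq (hQint u humeas huν n p)).symm
  -- pointwise identities
  have hptL : ∀ n p, Q f n p * g n p / M n p =
      ∫ y : ℕ × ℝ, (A ((n, p), y) - B ((n, p), y)) ∂ν := by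
    intro n p
    rw [hQrepr f hfmeas hfν n p, mul_div_assoc, ← MeasureTheory.integral_mul_const]
    refine integral_congr_ae (Filter.Eventually.of_forall fun y => ?_)
    have hMx : M n p ≠ 0 := (hMpos n p).ne'
    simp only [hA, hB]
    field_simp
  have hptR : ∀ n p, f n p * Q g n p / M n p =
      ∫ y : ℕ × ℝ, (A' ((n, p), y) - B ((n, p), y)) ∂ν := by
    intro n p
    rw [hQrepr g hgmeas hgν n p, mul_comm (f n p), mul_div_assoc,
      ← MeasureTheory.integral_mul_const]
    refine integral_congr_ae (Filter.Eventually.of_forall fun y => ?_)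
    have hMx : M n p ≠ 0 := (hMpos n p).ne'
    simp only [hA', hB]
    field_simp
  -- assemble
  have hABint : Integrable (fun z : (ℕ × ℝ) × ℕ × ℝ => A z - B z) (ν.prod ν) :=
    hAint.sub hBint
  have hABleft : Integrable
      (fun x : ℕ × ℝ => ∫ y, (A (x, y) - B (x, y)) ∂ν) (Measure.count.prod volume) :=
    hABint.integral_prod_left
  have hA'Bint : Integrable (fun z : (ℕ × ℝ) × ℕ × ℝ => A' z - B z) (ν.prod ν) :=
    hA'int.sub hBint
  have hA'Bleft : Integrable
      (fun x : ℕ × ℝ => ∫ y, (A' (x, y) - B (x, y)) ∂ν) (Measure.count.prod volume) :=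
    hA'Bint.integral_prod_left
  have hL : (∑' n, ∫ p, Q f n p * g n p / M n p) =
      (∫ z, A z ∂(ν.prod ν)) - ∫ z, B z ∂(ν.prod ν) := by
    calc (∑' n, ∫ p, Q f n p * g n p / M n p)
        = ∑' n, ∫ p, (fun x : ℕ × ℝ => ∫ y, (A (x, y) - B (x, y)) ∂ν) (n, p) :=
          tsum_congr fun n =>
            integral_congr_ae (Filter.Eventually.of_forall fun p => hptL n p)
      _ = ∫ x, (fun x : ℕ × ℝ => ∫ y, (A (x, y) - B (x, y)) ∂ν) x
            ∂(Measure.count.prod volume) := (integral_prod_nat_eq hABleft).symm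
      _ = ∫ z, (A z - B z) ∂(ν.prod ν) := (integral_prod _ hABint).symm
      _ = (∫ z, A z ∂(ν.prod ν)) - ∫ z, B z ∂(ν.prod ν) := integral_sub hAint hBint
  have hR : (∑' n, ∫ p, f n p * Q g n p / M n p) =
      (∫ z, A' z ∂(ν.prod ν)) - ∫ z, B z ∂(ν.prod ν) := by
    calc (∑' n, ∫ p, f n p * Q g n p / M n p)
        = ∑' n, ∫ p, (fun x : ℕ × ℝ => ∫ y, (A' (x, y) - B (x, y)) ∂ν) (n, p) :=
          tsum_congr fun n =>
            integral_congr_ae (Filter.Eventually.of_forall fun p => hptR n p)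
      _ = ∫ x, (fun x : ℕ × ℝ => ∫ y, (A' (x, y) - B (x, y)) ∂ν) x
            ∂(Measure.count.prod volume) := (integral_prod_nat_eq hA'Bleft).symm
      _ = ∫ z, (A' z - B z) ∂(ν.prod ν) := (integral_prod _ hA'Bint).symm
      _ = (∫ z, A' z ∂(ν.prod ν)) - ∫ z, B z ∂(ν.prod ν) := integral_sub hA'int hBint
  have hswap : (∫ z, A' z ∂(ν.prod ν)) = ∫ z, A z ∂(ν.prod ν) := by
    have h1 : A' = fun z : (ℕ × ℝ) × ℕ × ℝ => A z.swap := by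
      funext z
      simp only [hA, hA', Prod.swap]
      rw [hsym z.1.1 z.2.1 z.1.2 z.2.2]
      ring
    rw [h1]
    exact integral_prod_swap A
  rw [hL, hR, hswap]
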